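/- Let A be a commutative ring, let p, u ∈ A, and for each i ≥ 1 set a_i := p·u^i ∈ A. Then for every i ≥ 1 the element p^{i−1}·(a_i T^i − p) lies in the ideal of A[T] generated by a₁T − p (indeed a₁^i T^i − p^i = p^{i−1}(a_i T^i − p) and (a₁T − p) divides a₁^i T^i − p^i). Consequently, for every n ≥ 1 the kernel of the natural surjection A[T]/(a₁T − p) → A[T]/(a₁T − p, a₂T² − p, …, a_n T^n − p) is killed by p^{n−1}. (Claim established in §4.2.9: the kernel of B̃_n → B_n is killed by p^{n−1}.) -/

import Mathlib

open Polynomial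

/-- The claim established in §4.2.9: with `a_i = p·u^i`, for every `i ≥ 1` the element
`p^(i-1)·(a_i T^i - p)` lies in the ideal of `A[T]` generated by `a₁T - p`; consequently,
for every `n ≥ 1` the kernel of the natural surjection
`A[T]/(a₁T - p) → A[T]/(a₁T - p, …, a_n T^n - p)` is killed by `p^(n-1)`. -/
theorem kernel_of_Btilde_to_B_killed_by_pow_p
    (A : Type*) [CommRing A] (p u : A) :
    (∀ i : ℕ, 1 ≤ i →
      (C (p ^ (i - 1)) : A[X]) * (C (p * u ^ i) * X ^ i - C p)
        ∈ Ideal.span {C (p * u) * X - C p}) ∧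
    (∀ n : ℕ, 1 ≤ n →
      ∀ h : Ideal.span {C (p * u) * X - C p} ≤
          Ideal.span {g : A[X] | ∃ i : ℕ, 1 ≤ i ∧ i ≤ n ∧ g = C (p * u ^ i) * X ^ i - C p},
        ∀ x : A[X] ⧸ Ideal.span {C (p * u) * X - C p},
          Ideal.Quotient.factor h x = 0 →
            Ideal.Quotient.mk (Ideal.span {C (p * u) * X - C p}) (C (p ^ (n - 1))) * x = 0) := by
  have key : ∀ i : ℕ, 1 ≤ i →
      (C (p ^ (i - 1)) : A[X]) * (C (p * u ^ i) * X ^ i - C p)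
        ∈ Ideal.span {C (p * u) * X - C p} := by
    intro i hi
    obtain ⟨j, rfl⟩ := Nat.exists_eq_add_of_le hi
    rw [Ideal.mem_span_singleton]
    have : (C (p ^ (1 + j - 1)) : A[X]) * (C (p * u ^ (1 + j)) * X ^ (1 + j) - C p)
        = (C (p * u) * X) ^ (1 + j) - (C p) ^ (1 + j) := by
      simp only [Nat.add_sub_cancel_left, C_pow, C_mul, mul_pow]
      ring
    rw [this]
    exact sub_dvd_pow_sub_pow _ _ _
  refine ⟨key, ?_⟩
  intro n hn h x hx
  obtain ⟨f, rfl⟩ := Ideal.Quotient.mk_surjective x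
  rw [Ideal.Quotient.factor_mk, Ideal.Quotient.eq_zero_iff_mem] at hx
  rw [← map_mul, Ideal.Quotient.eq_zero_iff_mem]
  refine Submodule.span_induction ?_ ?_ ?_ ?_ hx
  · rintro g ⟨i, hi1, hin, rfl⟩
    have : (C (p ^ (n - 1)) : A[X]) * (C (p * u ^ i) * X ^ i - C p)
        = C (p ^ (n - i)) * (C (p ^ (i - 1)) * (C (p * u ^ i) * X ^ i - C p)) := by
      have e : n - i + (i - 1) = n - 1 := by omega
      rw [← mul_assoc, ← C_mul, ← pow_add, e]
    rw [this]
    exact Ideal.mul_mem_left _ _ (key i hi1)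
  · simp
  · intro a b _ _ ha hb
    rw [mul_add]
    exact Ideal.add_mem _ ha hb
  · intro c a _ ha
    rw [smul_eq_mul, mul_left_comm]
    exact Ideal.mul_mem_left _ _ ha
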